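/- Let C = (V, Σ, P, S) be a context-free grammar and let A, B ∈ V. Let C̃ be the grammar obtained from C by adding the productions A → B and B → A. Then for every nonterminal X, the set of strings derivable from X in C̃ equals the set of strings derivable from X in the grammar obtained by equating A and B in C (with the fresh nonterminal identified appropriately). -/

import Mathlib

/-- Relabel a symbol along a map of nonterminals. -/
def mapSymbol {T N N' : Type*} (f : N → N') : Symbol T N → Symbol T N'
  | .terminal t => .terminal t
  | .nonterminal n => .nonterminal (f n)

/-- Relabel a context-free rule along a map of nonterminals. -/
def mapRule {T N N' : Type*} (f : N → N') (r : ContextFreeRule T N) :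
    ContextFreeRule T N' :=
  ⟨f r.input, r.output.map (mapSymbol f)⟩

/-- Relabel all nonterminals of a grammar along a map `f`. -/
noncomputable def mapGrammar {T : Type*} (g : ContextFreeGrammar T) {N' : Type}
    (f : g.NT → N') : ContextFreeGrammar T :=
  haveI := Classical.decEq (ContextFreeRule T N')
  ⟨N', f g.initial, g.rules.image (mapRule f)⟩

/-- The map collapsing the two nonterminals `A` and `B` to a fresh nonterminal
(`none`), leaving all other nonterminals unchanged. -/
noncomputable def collapse {N : Type} (A B : N) (x : N) : Option N :=
  haveI := Classical.propDecidable (x = A ∨ x = B)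
  if x = A ∨ x = B then none else some x

/-- The grammar obtained from `g` by adding the productions `A → B` and `B → A`. -/
noncomputable def addBidirRules {T : Type*} (g : ContextFreeGrammar T)
    (A B : g.NT) : ContextFreeGrammar T :=
  haveI := Classical.decEq (ContextFreeRule T g.NT)
  ⟨g.NT, g.initial,
    insert ⟨A, [Symbol.nonterminal B]⟩ (insert ⟨B, [Symbol.nonterminal A]⟩ g.rules)⟩

lemma collapse_A {N : Type} (A B : N) : collapse A B A = none := by
  unfold collapse; exact if_pos (Or.inl rfl)

lemma collapse_B {N : Type} (A B : N) : collapse A B B = none := by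
  unfold collapse; exact if_pos (Or.inr rfl)

lemma collapse_eq_collapse {N : Type} {A B x y : N}
    (h : collapse A B x = collapse A B y) :
    x = y ∨ ((x = A ∨ x = B) ∧ (y = A ∨ y = B)) := by
  unfold collapse at h
  split at h <;> split at h <;> simp_all

lemma map_terminal_map {T N N' : Type*} (f : N → N') (w : List T) :
    (w.map (Symbol.terminal)).map (mapSymbol f) = w.map Symbol.terminal := by
  induction w with
  | nil => rfl
  | cons a t ih => simp [mapSymbol, ih]

lemma eq_terminals_of_map {T N N' : Type*} (f : N → N') {v : List (Symbol T N)} {w : List T}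
    (h : v.map (mapSymbol f) = w.map Symbol.terminal) : v = w.map Symbol.terminal := by
  induction v generalizing w with
  | nil => cases w with
    | nil => rfl
    | cons c t => simp at h
  | cons a t ih =>
    cases w with
    | nil => simp at h
    | cons c t' =>
      simp only [List.map_cons, List.cons.injEq] at h
      obtain ⟨h1, h2⟩ := h
      cases a with
      | terminal t0 => simp [mapSymbol] at h1; simp [ih h2, h1]
      | nonterminal n => simp [mapSymbol] at h1

lemma mem_addBidir {T : Type*} (g : ContextFreeGrammar T) (A B : g.NT)
    {r : ContextFreeRule T g.NT} (hr : r ∈ g.rules) : r ∈ (addBidirRules g A B).rules := by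
  classical
  exact @Finset.mem_insert_of_mem _ (Classical.decEq _) _ _ _ (@Finset.mem_insert_of_mem _ (Classical.decEq _) _ _ _ hr)

lemma swap_derives {T : Type*} (g : ContextFreeGrammar T) (A B : g.NT)
    {x y : g.NT} (hx : x = A ∨ x = B) (hy : y = A ∨ y = B)
    (p q : List (Symbol T g.NT)) :
    (addBidirRules g A B).Derives (p ++ [Symbol.nonterminal x] ++ q)
      (p ++ [Symbol.nonterminal y] ++ q) := by
  classical
  rcases hx with rfl | rfl <;> rcases hy with rfl | rfl
  · rfl
  · refine ContextFreeGrammar.Produces.single ⟨⟨x, [Symbol.nonterminal y]⟩, ?_, ?_⟩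
    · exact @Finset.mem_insert_self _ (Classical.decEq _) _ _
    · exact ContextFreeRule.rewrites_iff.mpr ⟨p, q, rfl, rfl⟩
  · refine ContextFreeGrammar.Produces.single ⟨⟨x, [Symbol.nonterminal y]⟩, ?_, ?_⟩
    · exact @Finset.mem_insert_of_mem _ (Classical.decEq _) _ _ _ (@Finset.mem_insert_self _ (Classical.decEq _) _ _)
    · exact ContextFreeRule.rewrites_iff.mpr ⟨p, q, rfl, rfl⟩
  · rfl

lemma forward_derives {T : Type*} (g : ContextFreeGrammar T) (A B : g.NT)
    {u v : List (Symbol T g.NT)}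
    (h : (addBidirRules g A B).Derives u v) :
    (mapGrammar g (collapse A B)).Derives (u.map (mapSymbol (collapse A B)))
      (v.map (mapSymbol (collapse A B))) := by
  classical
  delta mapGrammar addBidirRules at *
  induction h with
  | refl => rfl
  | tail _ hp ih =>
    refine ih.trans ?_
    obtain ⟨r, hr, hrw⟩ := hp
    rw [ContextFreeRule.rewrites_iff] at hrw
    obtain ⟨p, q, rfl, rfl⟩ := hrw
    replace hr : r = ⟨A, [Symbol.nonterminal B]⟩ ∨ r = ⟨B, [Symbol.nonterminal A]⟩ ∨ r ∈ g.rules :=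
      ((@Finset.mem_insert _ (Classical.decEq _) _ _ _).mp hr).imp_right (@Finset.mem_insert _ (Classical.decEq _) _ _ _).mp
    rcases hr with rfl | rfl | hr
    · simp only [List.map_append, List.map_cons, List.map_nil, mapSymbol]
      rw [collapse_A, collapse_B]
    · simp only [List.map_append, List.map_cons, List.map_nil, mapSymbol]
      rw [collapse_A, collapse_B]
    · refine ContextFreeGrammar.Produces.single
        ⟨mapRule (collapse A B) r, ?_, ?_⟩
      · exact @Finset.mem_image_of_mem _ _ (Classical.decEq _) _ _ _ hr
      · rw [ContextFreeRule.rewrites_iff]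
        refine ⟨p.map (mapSymbol (collapse A B)), q.map (mapSymbol (collapse A B)), ?_, ?_⟩
        · simp [mapRule, mapSymbol]
        · simp [mapRule]

lemma backward_derives {T : Type*} (g : ContextFreeGrammar T) (A B : g.NT)
    {u' v' : List (Symbol T (mapGrammar g (collapse A B)).NT)}
    (h : (mapGrammar g (collapse A B)).Derives u' v') :
    ∀ u : List (Symbol T g.NT), u.map (mapSymbol (collapse A B)) = u' →
      ∃ v : List (Symbol T g.NT), v.map (mapSymbol (collapse A B)) = v' ∧
        (addBidirRules g A B).Derives u v := by
  classical
  delta mapGrammar addBidirRules at *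
  induction h with
  | refl => exact fun u hu => ⟨u, hu, by rfl⟩
  | tail _ hp ih =>
    intro u hu
    obtain ⟨m, hm, hder⟩ := ih u hu
    obtain ⟨r', hr', hrw⟩ := hp
    obtain ⟨r, hr, rfl⟩ := (@Finset.mem_image _ _ (Classical.decEq _) _ _ _).mp hr'
    rw [ContextFreeRule.rewrites_iff] at hrw
    obtain ⟨p', q', hw, rfl⟩ := hrw
    rw [hw, List.append_assoc] at hm
    obtain ⟨p, rest, rfl, hp1, hrest⟩ := List.map_eq_append_iff.mp hm
    obtain ⟨mid, q, rfl, hmid, hq⟩ := List.map_eq_append_iff.mp hrest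
    cases mid with
    | nil => simp at hmid
    | cons a tail =>
      cases tail with
      | cons b t2 => simp at hmid
      | nil =>
        simp only [List.map_cons, List.map_nil, List.cons.injEq, and_true] at hmid
        cases a with
        | terminal t => simp [mapSymbol] at hmid
        | nonterminal x =>
          have hx : collapse A B x = collapse A B r.input := by
            simpa [mapSymbol, mapRule] using hmid
          refine ⟨p ++ r.output ++ q, ?_, ?_⟩
          · simp [hp1, hq, mapRule]
          · have h2 : (addBidirRules g A B).Derives (p ++ [Symbol.nonterminal x] ++ q)
                (p ++ [Symbol.nonterminal r.input] ++ q) := by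
              rcases collapse_eq_collapse hx with rfl | ⟨hxa, hia⟩
              · rfl
              · exact swap_derives g A B hxa hia p q
            have h3 : (addBidirRules g A B).Produces
                (p ++ [Symbol.nonterminal r.input] ++ q) (p ++ r.output ++ q) :=
              ⟨r, mem_addBidir g A B hr, ContextFreeRule.rewrites_iff.mpr ⟨p, q, rfl, rfl⟩⟩
            have hder' : (addBidirRules g A B).Derives u
                (p ++ [Symbol.nonterminal x] ++ q) := by
              exact (List.append_assoc p [Symbol.nonterminal x] q).symm ▸ hder
            exact (hder'.trans h2).trans h3.single

theorem stmt7 {T : Type*} (g : ContextFreeGrammar T) (A B : g.NT) (X : g.NT)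
    (w : List T) :
    (addBidirRules g A B).Derives [Symbol.nonterminal X] (w.map Symbol.terminal) ↔
      (mapGrammar g (collapse A B)).Derives [Symbol.nonterminal (collapse A B X)]
        (w.map Symbol.terminal) := by
  delta mapGrammar addBidirRules
  constructor
  · intro h
    have := forward_derives g A B h
    unfold mapGrammar at this
    rw [map_terminal_map] at this
    simpa [mapSymbol, map_terminal_map] using this
  · intro h
    obtain ⟨v, hv, hder⟩ := backward_derives g A B h [Symbol.nonterminal X]
      (by simp [mapSymbol])
    rwa [eq_terminals_of_map _ hv] at hder
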